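/- For an integer j ≥ 0, let z_j := (2j+3) − 2√((j+1)(j+2)) ∈ (0,1), and for real z ∈ [0, z_j] define M_j(z) := (1 + (2j²+4j+1)z − √(z² − (4j+6)z + 1)) / (2(j+1)(j+2)). Then for every integer k ≥ 1 there exists ε > 0 such that for all real z with 0 ≤ z < ε one has 0 ≤ M_k(z) ≤ z_{k−1} and M_{k−1}(M_k(z)) = 2·M_k(z) − z; equivalently, the identity M_k(z) = z + M_{k−1}(M_k(z)) − M_k(z) holds for all z in a neighbourhood of 0. -/
import Mathlib


/-- `z_j`, the smaller root of `z² - (4j+6)z + 1`. -/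
noncomputable def zcrit (j : ℕ) : ℝ :=
  (2 * (j : ℝ) + 3) - 2 * Real.sqrt (((j : ℝ) + 1) * ((j : ℝ) + 2))

/-- The closed form `M_j(z)` for the generating function of `j`-coloured marked trees. -/
noncomputable def Mgen (j : ℕ) (z : ℝ) : ℝ :=
  (1 + (2 * (j : ℝ) ^ 2 + 4 * (j : ℝ) + 1) * z -
      Real.sqrt (z ^ 2 - (4 * (j : ℝ) + 6) * z + 1)) /
    (2 * ((j : ℝ) + 1) * ((j : ℝ) + 2))

set_option maxHeartbeats 2000000 in
/-- For every `k ≥ 1` there is `ε > 0` such that for `0 ≤ z < ε` one has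
`0 ≤ M_k(z) ≤ z_{k-1}` and `M_{k-1}(M_k(z)) = 2 M_k(z) - z`; i.e. the identity
`M_k(z) = z + M_{k-1}(M_k(z)) - M_k(z)` holds near `0`. -/
theorem Mgen_functional_equation :
    ∀ k : ℕ, 1 ≤ k → ∃ ε : ℝ, 0 < ε ∧ ∀ z : ℝ, 0 ≤ z → z < ε →
      0 ≤ Mgen k z ∧ Mgen k z ≤ zcrit (k - 1) ∧
      Mgen (k - 1) (Mgen k z) = 2 * Mgen k z - z := by
  intro k hk
  set K : ℝ := (k : ℝ) with hKdef
  have hK : (1 : ℝ) ≤ K := by rw [hKdef]; exact_mod_cast hk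
  have hcast : ((k - 1 : ℕ) : ℝ) = K - 1 := by
    rw [Nat.cast_sub hk]; simp [hKdef]
  -- positivity of zcrit (k-1)
  have hzc : 0 < zcrit (k - 1) := by
    unfold zcrit
    rw [hcast]
    have h1 : (K - 1 + 1) * (K - 1 + 2) = K * (K + 1) := by ring
    rw [h1]
    have h2 : Real.sqrt (K * (K + 1)) < (2 * K + 1) / 2 := by
      rw [Real.sqrt_lt' (by linarith)]
      nlinarith
    linarith
  refine ⟨min (zcrit (k - 1) / 2) (1 / (8 * (K + 1) ^ 2)), ?_, ?_⟩
  · apply lt_min (by linarith)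
    positivity
  intro z hz0 hzε
  have hz1 : z ≤ zcrit (k - 1) / 2 := le_of_lt (lt_of_lt_of_le hzε (min_le_left _ _))
  have hz2 : z ≤ 1 / (8 * (K + 1) ^ 2) := le_of_lt (lt_of_lt_of_le hzε (min_le_right _ _))
  have hz2' : z * (8 * (K + 1) ^ 2) ≤ 1 := by
    rw [le_div_iff₀ (by positivity : (0:ℝ) < 8 * (K + 1) ^ 2)] at hz2
    exact hz2
  -- basic abbreviations
  have hQ : 0 ≤ z ^ 2 - (4 * K + 6) * z + 1 := by nlinarith
  set S : ℝ := Real.sqrt (z ^ 2 - (4 * K + 6) * z + 1) with hSdef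
  have hS2 : S ^ 2 = z ^ 2 - (4 * K + 6) * z + 1 := Real.sq_sqrt hQ
  have hS0 : 0 ≤ S := Real.sqrt_nonneg _
  have hSle1 : S ≤ 1 := by
    rw [hSdef, Real.sqrt_le_one]
    nlinarith [mul_nonneg hz0 (by nlinarith : (0:ℝ) ≤ 4 * K + 6 - z)]
  have hSge : 1 - (4 * K + 6) * z ≤ S := by
    have h1 : (0 : ℝ) ≤ 1 - (4 * K + 6) * z := by nlinarith
    have h2 : (1 - (4 * K + 6) * z) ^ 2 ≤ z ^ 2 - (4 * K + 6) * z + 1 := by nlinarith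
    calc 1 - (4 * K + 6) * z = Real.sqrt ((1 - (4 * K + 6) * z) ^ 2) := (Real.sqrt_sq h1).symm
      _ ≤ S := Real.sqrt_le_sqrt h2
  -- the value w = Mgen k z
  have hc : (0 : ℝ) < 2 * (K + 1) * (K + 2) := by nlinarith
  have hw_eq : Mgen k z =
      (1 + (2 * K ^ 2 + 4 * K + 1) * z - S) / (2 * (K + 1) * (K + 2)) := rfl
  set w : ℝ := Mgen k z with hwdef
  have hw0 : 0 ≤ w := by
    rw [hw_eq]
    apply div_nonneg _ (le_of_lt hc)
    nlinarith
  have hw2 : w ≤ 2 * z := by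
    rw [hw_eq]
    rw [div_le_iff₀ hc]
    nlinarith
  have hK2 : ((K : ℝ) + 2) ≠ 0 := by linarith
  have hwc : w * (2 * (K + 1) * (K + 2)) = 1 + (2 * K ^ 2 + 4 * K + 1) * z - S := by
    rw [hw_eq, div_mul_cancel₀]
    exact ne_of_gt hc
  -- the key squared identity
  have hkey' : (K + 2) * ((1 - (2 * K ^ 2 + 4 * K + 1) * w + 2 * K * (K + 1) * z) ^ 2) =
      (K + 2) * (w ^ 2 - (4 * K + 2) * w + 1) := by
    linear_combination
      (-(K * (1 + (2 * K ^ 2 + 4 * K + 1) * z - 2 * (K + 1) * (K + 2) * w + S))) * hwc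
        + K * hS2
  have hkey : (1 - (2 * K ^ 2 + 4 * K + 1) * w + 2 * K * (K + 1) * z) ^ 2 =
      w ^ 2 - (4 * K + 2) * w + 1 := mul_left_cancel₀ hK2 hkey'
  clear_value K S w
  clear hzε hSdef hwdef hKdef hw_eq hwc hkey' hS2
  -- inner square root argument is nonnegative
  have haux : (8 * K + 4) * z ≤ 1 := by
    have h8 : (8 * K + 4 : ℝ) ≤ 8 * (K + 1) ^ 2 := by nlinarith [sq_nonneg K]
    have h9 : (8 * K + 4) * z ≤ (8 * (K + 1) ^ 2) * z :=
      mul_le_mul_of_nonneg_right h8 hz0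
    nlinarith
  have haux2 : (4 * K ^ 2 + 8 * K + 2) * z ≤ 1 := by
    have h8 : (4 * K ^ 2 + 8 * K + 2 : ℝ) ≤ 8 * (K + 1) ^ 2 := by nlinarith [sq_nonneg K]
    have h9 : (4 * K ^ 2 + 8 * K + 2) * z ≤ (8 * (K + 1) ^ 2) * z :=
      mul_le_mul_of_nonneg_right h8 hz0
    nlinarith
  have hQ' : 0 ≤ w ^ 2 - (4 * K + 2) * w + 1 := by
    have h1 : (4 * K + 2) * w ≤ (4 * K + 2) * (2 * z) :=
      mul_le_mul_of_nonneg_left hw2 (by linarith)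
    nlinarith [sq_nonneg w]
  -- sign of the RHS of the squared identity
  have hR0 : 0 ≤ 1 - (2 * K ^ 2 + 4 * K + 1) * w + 2 * K * (K + 1) * z := by
    have h1 : (2 * K ^ 2 + 4 * K + 1) * w ≤ (2 * K ^ 2 + 4 * K + 1) * (2 * z) :=
      mul_le_mul_of_nonneg_left hw2 (by nlinarith)
    nlinarith [mul_nonneg (mul_nonneg (by linarith : (0:ℝ) ≤ 2 * K) (by linarith : (0:ℝ) ≤ K + 1)) hz0]
  have hsqrt : Real.sqrt (w ^ 2 - (4 * K + 2) * w + 1) =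
      1 - (2 * K ^ 2 + 4 * K + 1) * w + 2 * K * (K + 1) * z := by
    rw [← hkey, Real.sqrt_sq hR0]
  refine ⟨hw0, by linarith, ?_⟩
  -- compute Mgen (k-1) w
  have h1 : Mgen (k - 1) w =
      (1 + (2 * (K - 1) ^ 2 + 4 * (K - 1) + 1) * w -
        Real.sqrt (w ^ 2 - (4 * (K - 1) + 6) * w + 1)) /
      (2 * ((K - 1) + 1) * ((K - 1) + 2)) := by
    unfold Mgen
    rw [hcast]
  have h2 : w ^ 2 - (4 * (K - 1) + 6) * w + 1 = w ^ 2 - (4 * K + 2) * w + 1 := by ring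
  rw [h1, h2, hsqrt]
  have hKpos : (0 : ℝ) < 2 * K * (K + 1) := by nlinarith
  rw [div_eq_iff (by nlinarith : 2 * ((K - 1) + 1) * ((K - 1) + 2) ≠ 0)]
  ring
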